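/- Let Ω ⊂ ℝ² be a closed rectangular box with positive volume, let u : ℝ² → ℝ² be continuously differentiable on a neighborhood of Ω with div u = 0 on Ω and u = 0 on ∂Ω, let ε > 0 and π₁ > 0, and let D : ℝ² → ℝ be continuous with D ≥ 1 on Ω. Let c_Ω > 0 and let φ : ℝ² → ℝ be continuously differentiable on a neighborhood of Ω satisfying the Poincaré inequality ∫_Ω φ² dx ≤ c_Ω ∫_Ω |∇φ|² dx. Then a^ε(φ,φ) ≥ α_p ∫_Ω φ² dx with α_p = (π₁ + ε c_Ω)/c_Ω, i.e. ∫_Ω (u·∇φ)φ dx + π₁ ∫_Ω D |∇φ|² dx + ε ∫_Ω φ² dx ≥ ((π₁ + ε c_Ω)/c_Ω) ∫_Ω φ² dx. -/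

import Mathlib

open MeasureTheory Set

lemma convection_zero (a b : Fin 2 → ℝ) (hab : ∀ i, a i < b i)
    (Ω : Set (EuclideanSpace ℝ (Fin 2)))
    (hΩ : Ω = {x : EuclideanSpace ℝ (Fin 2) | ∀ i, x i ∈ Set.Icc (a i) (b i)})
    (U : Set (EuclideanSpace ℝ (Fin 2))) (hU : IsOpen U) (hΩU : Ω ⊆ U)
    (u : EuclideanSpace ℝ (Fin 2) → EuclideanSpace ℝ (Fin 2))
    (hu : ContDiffOn ℝ 1 u U)
    (hdiv : ∀ x ∈ Ω, (∑ i, fderiv ℝ u x (EuclideanSpace.single i 1) i) = 0)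
    (hubd : ∀ x ∈ frontier Ω, u x = 0)
    (V : Set (EuclideanSpace ℝ (Fin 2))) (hV : IsOpen V) (hΩV : Ω ⊆ V)
    (φ : EuclideanSpace ℝ (Fin 2) → ℝ)
    (hφ : ContDiffOn ℝ 1 φ V) :
    (∫ x in Ω, (inner ℝ (u x) (gradient φ x) : ℝ) * φ x) = 0 := by
  classical
  set m : (Fin 2 → ℝ) → EuclideanSpace ℝ (Fin 2) :=
    ⇑(EuclideanSpace.equiv (Fin 2) ℝ).symm with hm
  set mL : (Fin 2 → ℝ) →L[ℝ] EuclideanSpace ℝ (Fin 2) :=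
    (EuclideanSpace.equiv (Fin 2) ℝ).symm.toContinuousLinearMap with hmL
  set W := U ∩ V with hWdef
  have hW : IsOpen W := hU.inter hV
  have hΩW : Ω ⊆ W := Set.subset_inter hΩU hΩV
  have hle : a ≤ b := fun i => (hab i).le
  have hmem : ∀ y : Fin 2 → ℝ, m y ∈ Ω ↔ y ∈ Icc a b := by
    intro y
    rw [hΩ]
    constructor
    · intro h; exact ⟨fun i => (h i).1, fun i => (h i).2⟩
    · intro h i; exact ⟨h.1 i, h.2 i⟩
  -- differentiability facts
  have hφdiff : ∀ x ∈ W, HasFDerivAt φ (fderiv ℝ φ x) x := fun x hx =>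
    (((hφ.contDiffAt (hV.mem_nhds hx.2)).differentiableAt one_ne_zero)).hasFDerivAt
  have hudiff : ∀ x ∈ W, HasFDerivAt u (fderiv ℝ u x) x := fun x hx =>
    (((hu.contDiffAt (hU.mem_nhds hx.1)).differentiableAt one_ne_zero)).hasFDerivAt
  have hmd : ∀ y : Fin 2 → ℝ, HasFDerivAt m mL y := fun y =>
    (EuclideanSpace.equiv (Fin 2) ℝ).symm.hasFDerivAt
  -- the vector field and its derivative
  set f : Fin 2 → (Fin 2 → ℝ) → ℝ := fun i y => (φ (m y) * φ (m y)) * u (m y) i with hf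
  set f' : Fin 2 → (Fin 2 → ℝ) → (Fin 2 → ℝ) →L[ℝ] ℝ := fun i y =>
    (φ (m y) * φ (m y)) • ((EuclideanSpace.proj i).comp ((fderiv ℝ u (m y)).comp mL))
      + u (m y) i • (φ (m y) • ((fderiv ℝ φ (m y)).comp mL)
          + φ (m y) • ((fderiv ℝ φ (m y)).comp mL)) with hf'
  have Hd : ∀ y, m y ∈ W → ∀ i, HasFDerivAt (f i) (f' i y) y := by
    intro y hy i
    have hA : HasFDerivAt (fun y => φ (m y)) ((fderiv ℝ φ (m y)).comp mL) y :=
      (hφdiff (m y) hy).comp y (hmd y)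
    have hB : HasFDerivAt (fun y => u (m y) i)
        ((EuclideanSpace.proj i).comp ((fderiv ℝ u (m y)).comp mL)) y :=
      (EuclideanSpace.proj (𝕜 := ℝ) i).hasFDerivAt.comp y
        (((hudiff (m y) hy)).comp y (hmd y))
    exact (hA.mul hA).mul hB
  -- gradient representation of fderiv
  have hgradrep : ∀ x ∈ W, ∀ v, fderiv ℝ φ x v = (inner ℝ (gradient φ x) v : ℝ) := by
    intro x hx v
    have h1 : DifferentiableAt ℝ φ x :=
      (hφ.contDiffAt (hV.mem_nhds hx.2)).differentiableAt one_ne_zero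
    have := hasGradientAt_iff_hasFDerivAt.mp h1.hasGradientAt
    rw [this.fderiv]
    simp [InnerProductSpace.toDual_apply_apply]
  -- divergence computation on Ω
  have hsum : ∀ y ∈ Icc a b,
      (∑ i, f' i y (Pi.single i 1)) =
        2 * ((inner ℝ (u (m y)) (gradient φ (m y)) : ℝ) * φ (m y)) := by
    intro y hy
    have hyΩ : m y ∈ Ω := (hmem y).2 hy
    have hyW : m y ∈ W := hΩW hyΩ
    have hml : ∀ i : Fin 2, mL (Pi.single i 1) = EuclideanSpace.single i 1 := fun i => rfl
    simp only [hf', ContinuousLinearMap.add_apply, ContinuousLinearMap.smul_apply,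
      ContinuousLinearMap.comp_apply, hml, PiLp.proj_apply, smul_eq_mul]
    rw [Finset.sum_add_distrib, ← Finset.mul_sum, hdiv (m y) hyΩ, mul_zero, zero_add]
    have : ∀ i : Fin 2, fderiv ℝ φ (m y) (EuclideanSpace.single i 1)
        = gradient φ (m y) i := by
      intro i
      rw [hgradrep (m y) hyW, EuclideanSpace.inner_single_right]
      simp
    simp only [this, PiLp.inner_apply, RCLike.inner_apply, conj_trivial, Finset.sum_mul,
      Finset.mul_sum]
    exact Finset.sum_congr rfl fun i _ => by ring
  -- continuity facts
  have hmc : Continuous m := (EuclideanSpace.equiv (Fin 2) ℝ).symm.continuous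
  set W' : Set (Fin 2 → ℝ) := m ⁻¹' W with hW'
  have hW'open : IsOpen W' := hW.preimage hmc
  have hIccW' : Icc a b ⊆ W' := fun y hy => hΩW ((hmem y).2 hy)
  have hφc : ContinuousOn (fun y => φ (m y)) W' :=
    hφ.continuousOn.comp hmc.continuousOn (fun y hy => hy.2)
  have huc : ∀ i, ContinuousOn (fun y => u (m y) i) W' := fun i =>
    (EuclideanSpace.proj (𝕜 := ℝ) i).continuous.comp_continuousOn
      (hu.continuousOn.comp hmc.continuousOn (fun y hy => hy.1))
  have Hc : ∀ i, ContinuousOn (f i) (Icc a b) := fun i =>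
    ((hφc.mul hφc).mul (huc i)).mono hIccW'
  -- continuity of the gradient term
  have hgradc : ContinuousOn (fun y => gradient φ (m y)) W' := by
    have h1 : ContinuousOn (fderiv ℝ φ) V := hφ.continuousOn_fderiv_of_isOpen hV le_rfl
    have h2 : ∀ x, gradient φ x = (InnerProductSpace.toDual ℝ _).symm (fderiv ℝ φ x) :=
      fun x => rfl
    simp only [h2]
    exact (InnerProductSpace.toDual ℝ _).symm.continuous.comp_continuousOn
      (h1.comp hmc.continuousOn (fun y hy => hy.2))
  have hucfull : ContinuousOn (fun y => u (m y)) W' :=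
    hu.continuousOn.comp hmc.continuousOn (fun y hy => hy.1)
  have hnice : ContinuousOn
      (fun y => 2 * ((inner ℝ (u (m y)) (gradient φ (m y)) : ℝ) * φ (m y))) W' :=
    continuousOn_const.mul ((hucfull.inner hgradc).mul hφc)
  -- integrability of the divergence
  have Hi : IntegrableOn (fun y => ∑ i, f' i y (Pi.single i 1)) (Icc a b) := by
    refine IntegrableOn.congr_fun ?_ (fun y hy => (hsum y hy).symm) measurableSet_Icc
    exact (hnice.mono hIccW').integrableOn_compact isCompact_Icc
  -- divergence theorem
  have hthm := MeasureTheory.integral_divergence_of_hasFDerivAt_off_countable'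
    (n := 1) a b hle f f' ∅ Set.countable_empty Hc
    (fun y hy i => Hd y (hIccW' (by
      rw [← Set.pi_univ_Icc]
      exact fun j hj => Set.Ioo_subset_Icc_self (hy.1 j hj))) i) Hi
  -- frontier membership of face points
  have hΩpre : Ω = (EuclideanSpace.equiv (Fin 2) ℝ).toHomeomorph ⁻¹' Icc a b := by
    ext x
    exact hmem ((EuclideanSpace.equiv (Fin 2) ℝ).toHomeomorph x)
  have hfrontier : ∀ p : Fin 2 → ℝ, p ∈ Icc a b → p ∉ interior (Icc a b) →
      m p ∈ frontier Ω := by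
    intro p hp hpi
    rw [hΩpre, ← (EuclideanSpace.equiv (Fin 2) ℝ).toHomeomorph.preimage_frontier]
    exact ⟨subset_closure hp, hpi⟩
  have hintIcc : interior (Icc a b) = Set.pi Set.univ (fun i => Ioo (a i) (b i)) := by
    rw [← Set.pi_univ_Icc, interior_pi_set Set.finite_univ]
    simp [interior_Icc]
  -- face terms vanish
  have hface : ∀ (i : Fin 2) (c : ℝ), (c = a i ∨ c = b i) →
      ∀ x ∈ Icc (a ∘ i.succAbove) (b ∘ i.succAbove),
        f i (Fin.insertNth (α := fun _ => ℝ) i c x) = 0 := by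
    intro i c hc x hx
    set p := Fin.insertNth (α := fun _ => ℝ) i c x with hpdef
    have hpIcc : p ∈ Icc a b := by
      constructor <;> intro j <;>
        refine Fin.succAboveCases i ?_ ?_ j <;>
          simp only [hpdef, Fin.insertNth_apply_same, Fin.insertNth_apply_succAbove]
      · rcases hc with h | h <;> simp [h, (hab i).le]
      · exact fun k => hx.1 k
      · rcases hc with h | h <;> simp [h, (hab i).le]
      · exact fun k => hx.2 k
    have hpni : p ∉ interior (Icc a b) := by
      rw [hintIcc]
      intro h
      have := h i (Set.mem_univ i)
      rw [hpdef, Fin.insertNth_apply_same] at this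
      rcases hc with h' | h' <;> subst h' <;>
        simp [lt_irrefl] at this
    have hu0 : u (m p) = 0 := hubd (m p) (hfrontier p hpIcc hpni)
    show (φ (m p) * φ (m p)) * u (m p) i = 0
    rw [hu0]
    simp
  have hrhs : (∑ i : Fin 2,
      ((∫ x in Icc (a ∘ i.succAbove) (b ∘ i.succAbove), f i (i.insertNth (b i) x)) -
        ∫ x in Icc (a ∘ i.succAbove) (b ∘ i.succAbove), f i (i.insertNth (a i) x))) = 0 := by
    refine Finset.sum_eq_zero fun i _ => ?_
    rw [setIntegral_congr_fun measurableSet_Icc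
        (fun x hx => hface i (b i) (Or.inr rfl) x hx),
      setIntegral_congr_fun measurableSet_Icc
        (fun x hx => hface i (a i) (Or.inl rfl) x hx)]
    simp
  have hthm0 := hthm.trans hrhs
  -- transfer back to Ω
  have hIcczero : (∫ y in Icc a b,
      (inner ℝ (u (m y)) (gradient φ (m y)) : ℝ) * φ (m y)) = 0 := by
    have h2 : (∫ y in Icc a b,
        2 * ((inner ℝ (u (m y)) (gradient φ (m y)) : ℝ) * φ (m y))) = 0 := by
      rw [setIntegral_congr_fun (g := fun y => ∑ i, f' i y (Pi.single i 1))
        measurableSet_Icc (fun y hy => (hsum y hy).symm)]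
      exact hthm0
    rw [integral_const_mul] at h2
    linarith
  have e := (MeasurableEquiv.toLp 2 (Fin 2 → ℝ)).symm
  have hpre : ⇑(MeasurableEquiv.toLp 2 (Fin 2 → ℝ)).symm ⁻¹' Icc a b = Ω := by
    ext x
    exact (hmem ((MeasurableEquiv.toLp 2 (Fin 2 → ℝ)).symm x)).symm
  have htrans := (EuclideanSpace.volume_preserving_symm_measurableEquiv_toLp (Fin 2)).setIntegral_preimage_emb
    (MeasurableEquiv.toLp 2 (Fin 2 → ℝ)).symm.measurableEmbedding
    (fun y => (inner ℝ (u (m y)) (gradient φ (m y)) : ℝ) * φ (m y)) (Icc a b)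
  rw [hpre] at htrans
  exact htrans.trans hIcczero

/-- L² coercivity of `a^ε`: under the same hypotheses as Statement 1,
if moreover `φ` satisfies the Poincaré inequality `∫_Ω φ² ≤ c_Ω ∫_Ω |∇φ|²` with
`c_Ω > 0`, then `a^ε(φ,φ) ≥ ((π₁ + ε c_Ω)/c_Ω) ∫_Ω φ²`. -/
theorem stmt2 (a b : Fin 2 → ℝ) (hab : ∀ i, a i < b i)
    (Ω : Set (EuclideanSpace ℝ (Fin 2)))
    (hΩ : Ω = {x : EuclideanSpace ℝ (Fin 2) | ∀ i, x i ∈ Set.Icc (a i) (b i)})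
    (U : Set (EuclideanSpace ℝ (Fin 2))) (hU : IsOpen U) (hΩU : Ω ⊆ U)
    (u : EuclideanSpace ℝ (Fin 2) → EuclideanSpace ℝ (Fin 2))
    (hu : ContDiffOn ℝ 1 u U)
    (hdiv : ∀ x ∈ Ω, (∑ i, fderiv ℝ u x (EuclideanSpace.single i 1) i) = 0)
    (hubd : ∀ x ∈ frontier Ω, u x = 0)
    (ε π₁ : ℝ) (hε : 0 < ε) (hπ₁ : 0 < π₁)
    (D : EuclideanSpace ℝ (Fin 2) → ℝ) (hD : Continuous D)
    (hD1 : ∀ x ∈ Ω, 1 ≤ D x)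
    (cΩ : ℝ) (hcΩ : 0 < cΩ)
    (V : Set (EuclideanSpace ℝ (Fin 2))) (hV : IsOpen V) (hΩV : Ω ⊆ V)
    (φ : EuclideanSpace ℝ (Fin 2) → ℝ)
    (hφ : ContDiffOn ℝ 1 φ V)
    (hPoincare : (∫ x in Ω, (φ x) ^ 2) ≤ cΩ * (∫ x in Ω, ‖gradient φ x‖ ^ 2)) :
    ((π₁ + ε * cΩ) / cΩ) * (∫ x in Ω, (φ x) ^ 2) ≤
      (∫ x in Ω, (inner ℝ (u x) (gradient φ x) : ℝ) * φ x)
        + π₁ * (∫ x in Ω, D x * ‖gradient φ x‖ ^ 2)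
        + ε * (∫ x in Ω, (φ x) ^ 2) := by
  have hconv := convection_zero a b hab Ω hΩ U hU hΩU u hu hdiv hubd V hV hΩV φ hφ
  rw [hconv]
  -- Ω is compact and measurable
  have hΩpre : Ω = (EuclideanSpace.equiv (Fin 2) ℝ).toHomeomorph ⁻¹' Set.Icc a b := by
    ext x
    rw [hΩ]
    constructor
    · intro h; exact ⟨fun i => (h i).1, fun i => (h i).2⟩
    · intro h i; exact ⟨h.1 i, h.2 i⟩
  have hΩc : IsCompact Ω := by
    rw [hΩpre, ← Homeomorph.image_symm]
    exact isCompact_Icc.image (Homeomorph.continuous _)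
  have hΩm : MeasurableSet Ω := by
    rw [hΩpre]
    exact (isClosed_Icc.preimage (Homeomorph.continuous _)).measurableSet
  -- continuity of the gradient on V
  have hgradc : ContinuousOn (fun x => gradient φ x) V := by
    have h1 : ContinuousOn (fderiv ℝ φ) V := hφ.continuousOn_fderiv_of_isOpen hV le_rfl
    have h2 : ∀ x, gradient φ x = (InnerProductSpace.toDual ℝ _).symm (fderiv ℝ φ x) :=
      fun x => rfl
    simp only [h2]
    exact (InnerProductSpace.toDual ℝ _).symm.continuous.comp_continuousOn h1
  have hI1 : IntegrableOn (fun x => ‖gradient φ x‖ ^ 2) Ω := by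
    exact (((hgradc.norm.pow 2).mono hΩV)).integrableOn_compact hΩc
  have hI2 : IntegrableOn (fun x => D x * ‖gradient φ x‖ ^ 2) Ω :=
    (hD.continuousOn.mul ((hgradc.norm.pow 2).mono hΩV)).integrableOn_compact hΩc
  have hJ : (∫ x in Ω, ‖gradient φ x‖ ^ 2) ≤ ∫ x in Ω, D x * ‖gradient φ x‖ ^ 2 := by
    refine setIntegral_mono_on hI1 hI2 hΩm fun x hx => ?_
    exact le_mul_of_one_le_left (by positivity) (hD1 x hx)
  rw [div_mul_eq_mul_div, div_le_iff₀ hcΩ]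
  nlinarith [mul_le_mul_of_nonneg_left hPoincare hπ₁.le,
    mul_le_mul_of_nonneg_left hJ (mul_nonneg hπ₁.le hcΩ.le)]
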